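/- Let A_0, …, A_{N-1} be bounded operators on a Hilbert space lying in a set S ⊂ L(H) such that any product of m elements of S is zero, and suppose ‖A_i‖ ≤ K for all i. Let 0 < γ, t > 0, N ≥ m, and 1 − tγ/N > 0. Then ‖∏_{i=0}^{N-1} ((1 − tγ/N) I + (t/N) A_i)‖ ≤ (1 − tγ/N)^{N−m+1} Σ_{j=0}^{m−1} C(N,j) (1 − tγ/N)^{m−1−j} (tK/N)^j. -/

import Mathlib

open scoped BigOperators
noncomputable section

namespace Stmt7Aux

set_option linter.unusedSectionVars false

variable {R : Type*} [NormedRing R] [NormedAlgebra ℂ R]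

/-- Sum of products of all length-`j` sublists. -/
def T (L : List R) (j : ℕ) : R :=
  ((List.sublistsLen j L).map List.prod).sum

lemma T_zero (L : List R) : T L 0 = 1 := by simp [T]

lemma T_cons_succ (A : R) (L : List R) (j : ℕ) :
    T (A :: L) (j + 1) = T L (j + 1) + A * T L j := by
  have h : (List.prod ∘ List.cons A) = fun s : List R => A * s.prod := by
    funext s; simp
  simp only [T, List.sublistsLen_succ_cons, List.map_append, List.map_map, List.sum_append, h]
  congr 1
  induction (List.sublistsLen j L) with
  | nil => simp
  | cons s l ih => simp [ih, mul_add]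

lemma T_of_lt {L : List R} {j : ℕ} (h : L.length < j) : T L j = 0 := by
  simp [T, List.sublistsLen_of_length_lt h]

lemma expand (c d : ℂ) (L : List R) :
    (L.map fun A => c • (1 : R) + d • A).prod
      = ∑ j ∈ Finset.range (L.length + 1), (c ^ (L.length - j) * d ^ j) • T L j := by
  induction L with
  | nil => simp [T_zero]
  | cons A L ih =>
    have step1 : ((A :: L).map fun A => c • (1 : R) + d • A).prod
        = ∑ j ∈ Finset.range (L.length + 1),
            ((c ^ (L.length + 1 - j) * d ^ j) • T L j
              + (c ^ (L.length - j) * d ^ (j + 1)) • (A * T L j)) := by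
      rw [List.map_cons, List.prod_cons, ih, Finset.mul_sum]
      refine Finset.sum_congr rfl fun j hj => ?_
      have hj' : j < L.length + 1 := Finset.mem_range.1 hj
      rw [add_mul, smul_mul_assoc, smul_mul_assoc, one_mul, mul_smul_comm, smul_smul, smul_smul]
      congr 2
      · have : L.length + 1 - j = (L.length - j) + 1 := by omega
        rw [this, pow_succ]; ring
      · rw [pow_succ]; ring
    have step2 : ∑ j ∈ Finset.range (L.length + 1), (c ^ (L.length + 1 - j) * d ^ j) • T L j
        = c ^ (L.length + 1) • (1 : R)
          + ∑ j ∈ Finset.range (L.length + 1),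
              (c ^ (L.length - j) * d ^ (j + 1)) • T L (j + 1) := by
      rw [Finset.sum_range_succ'
        (fun j => (c ^ (L.length + 1 - j) * d ^ j) • T L j) L.length]
      rw [Finset.sum_range_succ
        (fun j => (c ^ (L.length - j) * d ^ (j + 1)) • T L (j + 1)) L.length]
      rw [T_of_lt (Nat.lt_succ_self _), smul_zero, add_zero, T_zero]
      rw [add_comm]
      congr 1
      · simp
      · refine Finset.sum_congr rfl fun j hj => ?_
        have hj' : j < L.length := Finset.mem_range.1 hj
        have he : L.length + 1 - (j + 1) = L.length - j := by omega
        rw [he]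
    have step3 : ∑ j ∈ Finset.range ((A :: L).length + 1),
          (c ^ ((A :: L).length - j) * d ^ j) • T (A :: L) j
        = c ^ (L.length + 1) • (1 : R)
          + (∑ j ∈ Finset.range (L.length + 1),
              (c ^ (L.length - j) * d ^ (j + 1)) • T L (j + 1)
            + ∑ j ∈ Finset.range (L.length + 1),
              (c ^ (L.length - j) * d ^ (j + 1)) • (A * T L j)) := by
      rw [List.length_cons]
      rw [Finset.sum_range_succ'
        (fun j => (c ^ (L.length + 1 - j) * d ^ j) • T (A :: L) j) (L.length + 1)]
      rw [← Finset.sum_add_distrib]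
      rw [add_comm]
      congr 1
      · simp [T_zero]
      · refine Finset.sum_congr rfl fun j hj => ?_
        have hj' : j < L.length + 1 := Finset.mem_range.1 hj
        have he : L.length + 1 - (j + 1) = L.length - j := by omega
        rw [T_cons_succ, he, smul_add]
    rw [step1, Finset.sum_add_distrib, step2, step3, add_assoc]

lemma T_eq_zero (S : Set R) (m : ℕ)
    (hS : ∀ l : List R, (∀ B ∈ l, B ∈ S) → l.length = m → l.prod = 0)
    (L : List R) (hL : ∀ B ∈ L, B ∈ S) {j : ℕ} (hj : m ≤ j) : T L j = 0 := by
  refine List.sum_eq_zero fun x hx => ?_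
  rw [List.mem_map] at hx
  obtain ⟨s, hs, rfl⟩ := hx
  rw [List.mem_sublistsLen] at hs
  obtain ⟨hsub, hlen⟩ := hs
  have hsplit : s = s.take m ++ s.drop m := (List.take_append_drop m s).symm
  rw [hsplit, List.prod_append]
  have h0 : (s.take m).prod = 0 := by
    refine hS _ (fun B hB => hL B (hsub.subset (List.mem_of_mem_take hB))) ?_
    rw [List.length_take, hlen]
    omega
  rw [h0, zero_mul]

lemma norm_prod_le_pow {K : ℝ} (hK0 : 0 ≤ K) (hone : ‖(1 : R)‖ ≤ 1) :
    ∀ l : List R, (∀ B ∈ l, ‖B‖ ≤ K) → ‖l.prod‖ ≤ K ^ l.length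
  | [], _ => by simpa using hone
  | a :: l, h => by
    rw [List.prod_cons, List.length_cons, pow_succ']
    refine (norm_mul_le _ _).trans ?_
    exact mul_le_mul (h a List.mem_cons_self) (norm_prod_le_pow hK0 hone l
      fun B hB => h B (List.mem_cons_of_mem a hB)) (norm_nonneg _)
      hK0

lemma norm_list_sum_le {b : ℝ} :
    ∀ {l : List R}, (∀ x ∈ l, ‖x‖ ≤ b) → ‖l.sum‖ ≤ l.length * b
  | [], _ => by simp
  | a :: l, h => by
    rw [List.sum_cons, List.length_cons]
    refine (norm_add_le _ _).trans ?_
    have := norm_list_sum_le (l := l) fun x hx => h x (List.mem_cons_of_mem a hx)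
    push_cast
    nlinarith [h a List.mem_cons_self, this]

lemma norm_T_le {K : ℝ} (hK0 : 0 ≤ K) (hone : ‖(1 : R)‖ ≤ 1)
    (L : List R) (hL : ∀ B ∈ L, ‖B‖ ≤ K) (j : ℕ) :
    ‖T L j‖ ≤ (L.length.choose j : ℝ) * K ^ j := by
  have h : ∀ x ∈ (List.sublistsLen j L).map List.prod, ‖x‖ ≤ K ^ j := by
    intro x hx
    rw [List.mem_map] at hx
    obtain ⟨s, hs, rfl⟩ := hx
    rw [List.mem_sublistsLen] at hs
    have := norm_prod_le_pow hK0 hone s fun B hB => hL B (hs.1.subset hB)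
    rwa [hs.2] at this
  have := norm_list_sum_le (l := (List.sublistsLen j L).map List.prod) h
  rwa [List.length_map, List.length_sublistsLen] at this

end Stmt7Aux

/-- if $S$ is a set of bounded operators on a Hilbert space such that any
(ordered) product of $m$ elements of $S$ is zero, $A_0,…,A_{N-1} ∈ S$ with $‖A_i‖ ≤ K$,
$t, γ > 0$, $N ≥ m$ and $1 - tγ/N > 0$, then
$‖∏_{i=0}^{N-1}((1-tγ/N)I + (t/N)A_i)‖ ≤
  (1-tγ/N)^{N-m+1} Σ_{j=0}^{m-1} \binom{N}{j}(1-tγ/N)^{m-1-j}(tK/N)^j$. -/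
theorem stmt7 {E : Type*} [NormedAddCommGroup E] [InnerProductSpace ℂ E] [CompleteSpace E]
    (S : Set (E →L[ℂ] E)) (m : ℕ) (hm : 1 ≤ m)
    (hS : ∀ l : List (E →L[ℂ] E), (∀ B ∈ l, B ∈ S) → l.length = m → l.prod = 0)
    (N : ℕ) (hN : m ≤ N) (A : Fin N → E →L[ℂ] E) (hA : ∀ i, A i ∈ S)
    (K t γ : ℝ) (hK : ∀ i, ‖A i‖ ≤ K) (ht : 0 < t) (hγ : 0 < γ)
    (hpos : 0 < 1 - t * γ / N) :
    ‖(List.ofFn fun i : Fin N =>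
        ((1 - t * γ / N : ℝ) : ℂ) • (1 : E →L[ℂ] E) + ((t / N : ℝ) : ℂ) • A i).prod‖ ≤
      (1 - t * γ / N) ^ (N - m + 1) *
        ∑ j ∈ Finset.range m,
          (N.choose j : ℝ) * (1 - t * γ / N) ^ (m - 1 - j) * (t * K / N) ^ j := by
  classical
  set a : ℝ := 1 - t * γ / N with ha
  set c : ℂ := (a : ℂ)
  set d : ℂ := ((t / N : ℝ) : ℂ)
  set L : List (E →L[ℂ] E) := List.ofFn A with hLdef
  have hNpos : 0 < N := lt_of_lt_of_le hm hN
  have hNR : (0 : ℝ) < N := by exact_mod_cast hNpos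
  have hK0 : 0 ≤ K := le_trans (norm_nonneg _) (hK ⟨0, hNpos⟩)
  have hLlen : L.length = N := List.length_ofFn
  have hLmem : ∀ B ∈ L, B ∈ S := by
    intro B hB
    rw [hLdef, List.mem_ofFn] at hB
    obtain ⟨i, rfl⟩ := hB
    exact hA i
  have hLnorm : ∀ B ∈ L, ‖B‖ ≤ K := by
    intro B hB
    rw [hLdef, List.mem_ofFn] at hB
    obtain ⟨i, rfl⟩ := hB
    exact hK i
  have hofn : (List.ofFn fun i : Fin N => c • (1 : E →L[ℂ] E) + d • A i)
      = L.map fun B => c • (1 : E →L[ℂ] E) + d • B := by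
    rw [hLdef, List.map_ofFn]; rfl
  rw [hofn, Stmt7Aux.expand, hLlen]
  -- kill terms with j ≥ m
  have hsub : Finset.range m ⊆ Finset.range (N + 1) :=
    Finset.range_subset_range.2 (by omega)
  have hzero : ∀ j ∈ Finset.range (N + 1), j ∉ Finset.range m →
      (c ^ (N - j) * d ^ j) • Stmt7Aux.T L j = 0 := by
    intro j _ hj
    rw [Finset.mem_range, not_lt] at hj
    rw [Stmt7Aux.T_eq_zero S m hS L hLmem hj, smul_zero]
  rw [← Finset.sum_subset hsub hzero]
  refine (norm_sum_le _ _).trans ?_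
  have hbound : ∀ j ∈ Finset.range m,
      ‖(c ^ (N - j) * d ^ j) • Stmt7Aux.T L j‖
        ≤ a ^ (N - m + 1) * ((N.choose j : ℝ) * a ^ (m - 1 - j) * (t * K / N) ^ j) := by
    intro j hj
    have hjm : j < m := Finset.mem_range.1 hj
    have hTnorm : ‖Stmt7Aux.T L j‖ ≤ (N.choose j : ℝ) * K ^ j := by
      have := Stmt7Aux.norm_T_le hK0 ContinuousLinearMap.norm_id_le L hLnorm j
      rwa [hLlen] at this
    have hcd : ‖c ^ (N - j) * d ^ j‖ = a ^ (N - j) * (t / N) ^ j := by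
      have hc : ‖c‖ = a := by
        simp only [c, Complex.norm_real]
        exact Real.norm_of_nonneg hpos.le
      have hd : ‖d‖ = t / N := by
        simp only [d, Complex.norm_real]
        exact Real.norm_of_nonneg (div_pos ht hNR).le
      rw [norm_mul, norm_pow, norm_pow, hc, hd]
    rw [norm_smul, hcd]
    have he : a ^ (N - j) = a ^ (N - m + 1) * a ^ (m - 1 - j) := by
      rw [← pow_add]
      congr 1
      omega
    have hbase : t / N * K = t * K / N := by ring
    calc a ^ (N - j) * (t / N) ^ j * ‖Stmt7Aux.T L j‖
        ≤ a ^ (N - j) * (t / N) ^ j * ((N.choose j : ℝ) * K ^ j) := by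
          refine mul_le_mul_of_nonneg_left hTnorm ?_
          positivity
      _ = a ^ (N - m + 1) * ((N.choose j : ℝ) * a ^ (m - 1 - j) * (t * K / N) ^ j) := by
          rw [he, ← hbase, mul_pow]
          ring
  refine (Finset.sum_le_sum hbound).trans_eq ?_
  rw [Finset.mul_sum]
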